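/- Let n ≥ 3 and let S ⊆ V(Q_n) with |S| = 2^{n−1} and Type(S) = t < 2^{n−3}. Then there exists a unique half plane H of Q_n with |S ∩ H| = t, and for every half plane H′ ≠ H one has |S ∩ H′| ≥ 2^{n−2} − t > 2^{n−3}. -/

import Mathlib

open Finset

/-- Two vertices of the hypercube `Q_n` are adjacent iff they differ in exactly one
coordinate. -/
def cubeEdge {n : ℕ} (u v : Fin n → Bool) : Prop :=
  (Finset.univ.filter (fun i => u i ≠ v i)).card = 1

instance {n : ℕ} (u v : Fin n → Bool) : Decidable (cubeEdge u v) := by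
  unfold cubeEdge; infer_instance

/-- `θ(n,S)`: the number of edges of `Q_n` with exactly one endpoint in `S`. -/
def edgeBoundary (n : ℕ) (S : Finset (Fin n → Bool)) : ℕ :=
  (Finset.univ.filter (fun p : (Fin n → Bool) × (Fin n → Bool) =>
    p.1 ∈ S ∧ p.2 ∉ S ∧ cubeEdge p.1 p.2)).card

/-- `θ(n,k) = min {θ(n,S) : S ⊆ V(Q_n), |S| = k}`. -/
noncomputable def thetaMin (n k : ℕ) : ℕ :=
  sInf {m | ∃ S : Finset (Fin n → Bool), S.card = k ∧ edgeBoundary n S = m}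

/-- The half plane `{x : x_i = a}` of `Q_n`. -/
def halfPlane (n : ℕ) (i : Fin n) (a : Bool) : Finset (Fin n → Bool) :=
  Finset.univ.filter (fun x => x i = a)

/-- `Type(S) = min_H |S ∩ H|`, minimum over the `2n` half planes of `Q_n`. -/
noncomputable def typeOf (n : ℕ) (S : Finset (Fin n → Bool)) : ℕ :=
  sInf {m | ∃ (i : Fin n) (a : Bool), (S ∩ halfPlane n i a).card = m}

/-- `θ(n,k,t) = min {θ(n,S) : |S| = k, Type(S) = t}`. -/
noncomputable def thetaMinType (n k t : ℕ) : ℕ :=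
  sInf {m | ∃ S : Finset (Fin n → Bool),
    S.card = k ∧ typeOf n S = t ∧ edgeBoundary n S = m}

/-- Graph distance on the cycle `C_m` with vertices labelled by naturals. -/
def cycleDist (m a b : ℕ) : ℕ := min (Nat.dist a b) (m - Nat.dist a b)

/-- The wirelength of an embedding `η` of `Q_n` into the cycle `C_{2^n}`:
the sum of cycle distances over all (unordered) edges of `Q_n`.  (The sum over
ordered pairs counts every edge twice, whence the division by `2`.) -/
def wirelength (n : ℕ) (η : (Fin n → Bool) → ℕ) : ℕ :=
  ((Finset.univ.filter (fun p : (Fin n → Bool) × (Fin n → Bool) =>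
    cubeEdge p.1 p.2)).sum (fun p => cycleDist (2^n) (η p.1) (η p.2))) / 2

/-- The reflected Gray code embedding `ξ_n(x) = (y)_2 + 1`, where
`y_i = (x_1 + ⋯ + x_i) mod 2`. -/
def xi (n : ℕ) (x : Fin n → Bool) : ℕ :=
  (Finset.univ.sum (fun i : Fin n =>
    ((Finset.univ.filter (fun j : Fin n => j ≤ i ∧ x j = true)).card % 2)
      * 2 ^ (n - 1 - (i : ℕ)))) + 1

/-- `f(x) = 3/4 − (64/7)(x − 1/2)²`. -/
noncomputable def fGuu (x : ℝ) : ℝ := 3/4 - 64/7 * (x - 1/2)^2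

/-- `takDelta i` is `Δ_{i+1}`: `Δ_1(x) = 1/2 − |x − 1/2|`,
`Δ_{n}(x) = (1/2)Δ_{n−1}(2x − ⌊2x⌋)`. -/
noncomputable def takDelta : ℕ → ℝ → ℝ
  | 0, x => 1/2 - |x - 1/2|
  | n+1, x => takDelta n (2*x - (⌊2*x⌋ : ℝ)) / 2

/-- `m_n(x) = Σ_{i=1}^n Δ_i(x)`, the n-th partial sum of the Takagi function. -/
noncomputable def mTakagi (n : ℕ) (x : ℝ) : ℝ := ∑ i ∈ Finset.range n, takDelta i x

/-- `y_N = ⌈2^N/24⌉ / 2^N`. -/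
noncomputable def yGuu (N : ℕ) : ℝ := (⌈(2^N : ℝ)/24⌉ : ℝ) / 2^N

/-- `p_N = 1/2 − y_N`. -/
noncomputable def pGuu (N : ℕ) : ℝ := 1/2 - yGuu N

/-- `g_{n,i,a}^{-1}(S)`, where `g_{n,i,a}` inserts the letter `a` at position `i`. -/
def gPre (n : ℕ) (i : Fin (n+1)) (a : Bool) (S : Finset (Fin (n+1) → Bool)) :
    Finset (Fin n → Bool) :=
  Finset.univ.filter (fun x => i.insertNth a x ∈ S)


section auxHalfPlane
variable {n : ℕ}

lemma pow_two_mul' (m : ℕ) : (2:ℕ)^(m+1) = 2 * 2^m := by rw [pow_succ]; ring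

lemma pow_e0 {m : ℕ} (h : 1 ≤ m) : (2:ℕ)^m = 2 * 2^(m-1) := by
  conv_lhs => rw [show m = (m-1)+1 by omega]
  exact pow_two_mul' _

lemma pow_e1 {m : ℕ} (h : 2 ≤ m) : (2:ℕ)^(m-1) = 2 * 2^(m-2) := by
  conv_lhs => rw [show m-1 = (m-2)+1 by omega]
  exact pow_two_mul' _

lemma pow_e2 {m : ℕ} (h : 3 ≤ m) : (2:ℕ)^(m-2) = 2 * 2^(m-3) := by
  conv_lhs => rw [show m-2 = (m-3)+1 by omega]
  exact pow_two_mul' _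

lemma filter_split' (S : Finset (Fin n → Bool)) (i : Fin n) (a : Bool) :
    (S.filter (fun x => x i = a)).card + (S.filter (fun x => x i = !a)).card = S.card := by
  have h : ∀ x : Fin n → Bool, (x i = !a) ↔ ¬ (x i = a) := by
    intro x; cases a <;> cases h : x i <;> simp
  simp only [h]
  exact Finset.card_filter_add_card_filter_not _

lemma flip_card' (i : Fin n) (p : (Fin n → Bool) → Prop) [DecidablePred p]
    (hp : ∀ x v, p (Function.update x i v) ↔ p x) (a : Bool) :
    (univ.filter fun x => x i = a ∧ p x).card
      = (univ.filter fun x => x i = !a ∧ p x).card := by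
  apply Finset.card_nbij' (fun x => Function.update x i (!a)) (fun x => Function.update x i a)
  · intro x hx
    simp only [mem_coe, mem_filter, mem_univ, true_and] at hx ⊢
    exact ⟨Function.update_self _ _ _, (hp x (!a)).2 hx.2⟩
  · intro x hx
    simp only [mem_coe, mem_filter, mem_univ, true_and] at hx ⊢
    exact ⟨Function.update_self _ _ _, (hp x a).2 hx.2⟩
  · intro x hx
    simp only [mem_coe, mem_filter, mem_univ, true_and] at hx
    beta_reduce
    rw [Function.update_idem, ← hx.1, Function.update_eq_self]
  · intro x hx
    simp only [mem_coe, mem_filter, mem_univ, true_and] at hx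
    beta_reduce
    rw [Function.update_idem, ← hx.1, Function.update_eq_self]

lemma double_card' (i : Fin n) (p : (Fin n → Bool) → Prop) [DecidablePred p]
    (hp : ∀ x v, p (Function.update x i v) ↔ p x) (a : Bool) :
    (univ.filter p).card = 2 * (univ.filter fun x => x i = a ∧ p x).card := by
  have h1 : ((univ.filter p).filter (fun x => x i = a)).card
      + ((univ.filter p).filter (fun x => x i = !a)).card = (univ.filter p).card :=
    filter_split' _ i a
  rw [filter_filter, filter_filter] at h1
  have e1 : (univ.filter fun x => p x ∧ x i = a) = (univ.filter fun x => x i = a ∧ p x) := by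
    apply filter_congr; intro x _; simp [and_comm]
  have e2 : (univ.filter fun x => p x ∧ x i = !a) = (univ.filter fun x => x i = !a ∧ p x) := by
    apply filter_congr; intro x _; simp [and_comm]
  rw [e1, e2, ← flip_card' i p hp a] at h1
  rw [two_mul]
  exact h1.symm

lemma half_card' (hn : 1 ≤ n) (i : Fin n) (a : Bool) :
    (univ.filter fun x : Fin n → Bool => x i = a).card = 2^(n-1) := by
  have h := double_card' i (fun _ => True) (by intro x v; simp) a
  simp only [filter_true, and_true] at h
  have huniv : (univ : Finset (Fin n → Bool)).card = 2^n := by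
    simp [Finset.card_univ]
  have key : 2 * (univ.filter fun x : Fin n → Bool => x i = a).card = 2 * 2^(n-1) := by
    rw [← h, huniv]
    exact pow_e0 hn
  exact Nat.eq_of_mul_eq_mul_left (by norm_num) key

lemma quarter_card' (hn : 2 ≤ n) {i j : Fin n} (hij : i ≠ j) (a b : Bool) :
    (univ.filter fun x : Fin n → Bool => x i = a ∧ x j = b).card = 2^(n-2) := by
  have h := double_card' i (fun x => x j = b)
    (by intro x v; beta_reduce; rw [Function.update_of_ne (Ne.symm hij)]) a
  have h2 : (univ.filter fun x : Fin n → Bool => x j = b).card = 2^(n-1) :=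
    half_card' (le_trans (by norm_num : (1:ℕ) ≤ 2) hn) j b
  have key : 2 * (univ.filter fun x : Fin n → Bool => x i = a ∧ x j = b).card
      = 2 * 2^(n-2) := by
    rw [← h, h2]
    exact pow_e1 hn
  exact Nat.eq_of_mul_eq_mul_left (by norm_num) key

lemma inter_hp (S : Finset (Fin n → Bool)) (i : Fin n) (a : Bool) :
    S ∩ halfPlane n i a = S.filter (fun x => x i = a) := by
  ext x; simp [halfPlane, mem_filter, mem_inter]

lemma arith_pows {n : ℕ} (hn : 3 ≤ n) :
    (2:ℕ)^(n-1) = 2 * 2^(n-2) ∧ (2:ℕ)^(n-2) = 2 * 2^(n-3) := by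
  exact ⟨pow_e1 (le_trans (by norm_num) hn), pow_e2 hn⟩

lemma arith_compl {n t cA cB sc : ℕ} (hn : 3 ≤ n) (ht : t < 2^(n-3))
    (h1 : cA = t) (h2 : cA + cB = sc) (h3 : sc = 2^(n-1)) : 2^(n-2) - t ≤ cB := by
  obtain ⟨e1, e2⟩ := arith_pows hn
  omega

lemma arith_quarter {n t cA cB sc cTb cTnb cG : ℕ} (hn : 3 ≤ n) (ht : t < 2^(n-3))
    (h1 : cA = t) (h2 : cA + cB = sc) (h3 : sc = 2^(n-1))
    (h4 : cTb + cTnb = cB) (h5 : cTnb ≤ 2^(n-2)) (h6 : cTb ≤ cG) :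
    2^(n-2) - t ≤ cG := by
  obtain ⟨e1, e2⟩ := arith_pows hn
  omega

lemma arith_uniq {n t : ℕ} (hn : 3 ≤ n) (ht : t < 2^(n-3)) (h : 2^(n-2) - t ≤ t) : False := by
  obtain ⟨e1, e2⟩ := arith_pows hn
  omega

lemma arith_gt {n t : ℕ} (hn : 3 ≤ n) (ht : t < 2^(n-3)) : 2^(n-2) - t > 2^(n-3) := by
  obtain ⟨e1, e2⟩ := arith_pows hn
  omega

lemma key_lemma {n t : ℕ} (hn : 3 ≤ n) (S : Finset (Fin n → Bool))
    (hcard : S.card = 2^(n-1)) (htlt : t < 2^(n-3))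
    {i : Fin n} {a : Bool} (hH : (S ∩ halfPlane n i a).card = t)
    {j : Fin n} {b : Bool} (hne : ¬ (j = i ∧ b = a)) :
    2^(n-2) - t ≤ (S ∩ halfPlane n j b).card := by
  rw [inter_hp] at hH ⊢
  have hsplit := filter_split' S i a
  by_cases hji : j = i
  · subst hji
    have hba : b = !a := by
      rcases a with _|_ <;> rcases b with _|_ <;> simp_all
    subst hba
    exact arith_compl hn htlt hH hsplit hcard
  · set T := S.filter (fun x => x i = !a) with hT
    have hTsplit := filter_split' T j b
    have hTnb : (T.filter (fun x => x j = !b)).card ≤ 2^(n-2) := by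
      have hsub : T.filter (fun x => x j = !b)
          ⊆ univ.filter (fun x : Fin n → Bool => x i = !a ∧ x j = !b) := by
        intro x hx
        simp only [hT, mem_filter, mem_univ, true_and] at hx ⊢
        exact ⟨hx.1.2, hx.2⟩
      have h := Finset.card_le_card hsub
      rwa [quarter_card' (le_trans (by norm_num : (2:ℕ) ≤ 3) hn) (fun h => hji h.symm) (!a) (!b)] at h
    have hmono : (T.filter (fun x => x j = b)).card ≤ (S.filter (fun x => x j = b)).card := by
      apply Finset.card_le_card
      intro x hx
      simp only [hT, mem_filter] at hx ⊢
      exact ⟨hx.1.1, hx.2⟩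
    exact arith_quarter hn htlt hH hsplit hcard hTsplit hTnb hmono

end auxHalfPlane

/-- Guu's unique half plane lemma. -/
theorem unique_half_plane (n t : ℕ) (hn : 3 ≤ n) (S : Finset (Fin n → Bool))
    (hcard : S.card = 2^(n-1)) (htype : typeOf n S = t) (ht : t < 2^(n-3)) :
    (∃! H : Finset (Fin n → Bool),
        (∃ (i : Fin n) (a : Bool), H = halfPlane n i a) ∧ (S ∩ H).card = t) ∧
    (∀ H H' : Finset (Fin n → Bool),
        (∃ (i : Fin n) (a : Bool), H = halfPlane n i a) →
        (∃ (i : Fin n) (a : Bool), H' = halfPlane n i a) →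
        (S ∩ H).card = t → H' ≠ H →
        (S ∩ H').card ≥ 2^(n-2) - t ∧ 2^(n-2) - t > 2^(n-3)) := by
  have hmem : t ∈ {m | ∃ (i : Fin n) (a : Bool), (S ∩ halfPlane n i a).card = m} := by
    rw [← htype]
    apply Nat.sInf_mem
    have hpos : 0 < n := lt_of_lt_of_le (by norm_num) hn
    exact ⟨(S ∩ halfPlane n ⟨0, hpos⟩ true).card, ⟨0, hpos⟩, true, rfl⟩
  obtain ⟨i, a, hia⟩ := hmem
  constructor
  · refine ⟨halfPlane n i a, ⟨⟨i, a, rfl⟩, hia⟩, ?_⟩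
    rintro H' ⟨⟨j, b, rfl⟩, hc⟩
    by_cases h : j = i ∧ b = a
    · rw [h.1, h.2]
    · exact absurd (hc ▸ key_lemma hn S hcard ht hia h) (fun hk => arith_uniq hn ht hk)
  · rintro H H' ⟨i', a', rfl⟩ ⟨j, b, rfl⟩ hcH hne
    have hne' : ¬ (j = i' ∧ b = a') := by
      rintro ⟨rfl, rfl⟩; exact hne rfl
    exact ⟨key_lemma hn S hcard ht hcH hne', arith_gt hn ht⟩
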